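/- Fix λ > 0 and R_X, R_W > 0. Let C' ⊆ ℝ^{r×n} be a compact set containing the zero matrix, and define ℓ(X, W) = inf_{H ∈ C'} ( ‖X − W H‖_F² + λ ‖H‖₁ ) for X ∈ ℝ^{d×n} and W ∈ ℝ^{d×r}. Set M = 2 R_X + 2 R_W R_X² / λ. Then for all X₁, X₂ ∈ ℝ^{d×n} with ‖X₁‖_F ≤ R_X and ‖X₂‖_F ≤ R_X, and all W₁, W₂ ∈ ℝ^{d×r} with ‖W₁‖_F ≤ R_W and ‖W₂‖_F ≤ R_W, one has |ℓ(X₁, W₁) − ℓ(X₂, W₂)| ≤ M ( ‖X₁ − X₂‖_F + λ⁻¹ R_X² ‖W₁ − W₂‖_F ). -/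
import Mathlib


open Matrix

/-- Frobenius norm of a real matrix. -/
noncomputable def frobNorm {m n : ℕ} (M : Matrix (Fin m) (Fin n) ℝ) : ℝ :=
  Real.sqrt (∑ i, ∑ j, (M i j) ^ 2)

/-- Entrywise one-norm of a real matrix. -/
noncomputable def oneNorm {m n : ℕ} (M : Matrix (Fin m) (Fin n) ℝ) : ℝ :=
  ∑ i, ∑ j, |M i j|

lemma frobNorm_eq {m n : ℕ} (M : Matrix (Fin m) (Fin n) ℝ) :
    frobNorm M = @norm _ Matrix.frobeniusSeminormedAddCommGroup.toNorm M := by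
  rw [Matrix.frobenius_norm_def, frobNorm, Real.sqrt_eq_rpow]
  congr 1
  refine Finset.sum_congr rfl fun i _ => Finset.sum_congr rfl fun j _ => ?_
  rw [Real.norm_eq_abs, Real.rpow_two, sq_abs]

lemma frobNorm_nonneg {m n : ℕ} (M : Matrix (Fin m) (Fin n) ℝ) : 0 ≤ frobNorm M :=
  Real.sqrt_nonneg _

lemma oneNorm_nonneg {m n : ℕ} (M : Matrix (Fin m) (Fin n) ℝ) : 0 ≤ oneNorm M :=
  Finset.sum_nonneg fun _ _ => Finset.sum_nonneg fun _ _ => abs_nonneg _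

lemma oneNorm_zero {m n : ℕ} : oneNorm (0 : Matrix (Fin m) (Fin n) ℝ) = 0 := by
  simp [oneNorm]

lemma frobNorm_add_le {m n : ℕ} (A B : Matrix (Fin m) (Fin n) ℝ) :
    frobNorm (A + B) ≤ frobNorm A + frobNorm B := by
  letI := Matrix.frobeniusSeminormedAddCommGroup (α := ℝ) (m := Fin m) (n := Fin n)
  rw [frobNorm_eq, frobNorm_eq, frobNorm_eq]
  exact norm_add_le A B

lemma frobNorm_sub_le {m n : ℕ} (A B : Matrix (Fin m) (Fin n) ℝ) :
    frobNorm (A - B) ≤ frobNorm A + frobNorm B := by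
  letI := Matrix.frobeniusSeminormedAddCommGroup (α := ℝ) (m := Fin m) (n := Fin n)
  rw [frobNorm_eq, frobNorm_eq, frobNorm_eq]
  exact norm_sub_le A B

lemma frobNorm_sub_comm {m n : ℕ} (A B : Matrix (Fin m) (Fin n) ℝ) :
    frobNorm (A - B) = frobNorm (B - A) := by
  unfold frobNorm
  congr 1
  refine Finset.sum_congr rfl fun i _ => Finset.sum_congr rfl fun j _ => ?_
  simp [Matrix.sub_apply]; ring

lemma frobNorm_mul_le {l m n : ℕ} (A : Matrix (Fin l) (Fin m) ℝ) (B : Matrix (Fin m) (Fin n) ℝ) :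
    frobNorm (A * B) ≤ frobNorm A * frobNorm B := by
  letI := Matrix.frobeniusSeminormedAddCommGroup (α := ℝ) (m := Fin l) (n := Fin m)
  letI := Matrix.frobeniusSeminormedAddCommGroup (α := ℝ) (m := Fin m) (n := Fin n)
  letI := Matrix.frobeniusSeminormedAddCommGroup (α := ℝ) (m := Fin l) (n := Fin n)
  rw [frobNorm_eq, frobNorm_eq, frobNorm_eq]
  exact Matrix.frobenius_norm_mul A B

lemma frobNorm_le_oneNorm {m n : ℕ} (M : Matrix (Fin m) (Fin n) ℝ) :
    frobNorm M ≤ oneNorm M := by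
  rw [frobNorm, oneNorm]
  rw [show (∑ i, ∑ j, |M i j| : ℝ) = Real.sqrt ((∑ i, ∑ j, |M i j|) ^ 2) from
    (Real.sqrt_sq (oneNorm_nonneg M)).symm]
  apply Real.sqrt_le_sqrt
  calc ∑ i, ∑ j, (M i j) ^ 2 = ∑ p : Fin m × Fin n, (M p.1 p.2) ^ 2 := by
        rw [← Finset.sum_product']; rfl
    _ ≤ (∑ p : Fin m × Fin n, |M p.1 p.2|) ^ 2 := by
        have := Finset.sum_sq_le_sq_sum_of_nonneg (s := Finset.univ)
          (f := fun p : Fin m × Fin n => |M p.1 p.2|) (fun p _ => abs_nonneg _)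
        simpa [sq_abs] using this
    _ = (∑ i, ∑ j, |M i j|) ^ 2 := by rw [← Finset.sum_product']; rfl

lemma sc_cont {d n r : ℕ} (lam : ℝ) (X : Matrix (Fin d) (Fin n) ℝ)
    (W : Matrix (Fin d) (Fin r) ℝ) :
    Continuous (fun H : Matrix (Fin r) (Fin n) ℝ =>
      frobNorm (X - W * H) ^ 2 + lam * oneNorm H) := by
  unfold frobNorm oneNorm
  simp only [Matrix.sub_apply, Matrix.mul_apply]
  fun_prop

/-- One-sided Lipschitz bound. -/
lemma stmt8_key {d n r : ℕ} (lam RX RW : ℝ) (hlam : 0 < lam) (hRX : 0 < RX) (hRW : 0 < RW)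
    (C' : Set (Matrix (Fin r) (Fin n) ℝ)) (hC' : IsCompact C')
    (h0 : (0 : Matrix (Fin r) (Fin n) ℝ) ∈ C')
    (ℓ : Matrix (Fin d) (Fin n) ℝ → Matrix (Fin d) (Fin r) ℝ → ℝ)
    (hℓ : ∀ X W, ℓ X W = sInf ((fun H : Matrix (Fin r) (Fin n) ℝ =>
      frobNorm (X - W * H) ^ 2 + lam * oneNorm H) '' C'))
    (M : ℝ) (hM : M = 2 * RX + 2 * RW * RX ^ 2 / lam)
    (X₁ X₂ : Matrix (Fin d) (Fin n) ℝ) (W₁ W₂ : Matrix (Fin d) (Fin r) ℝ)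
    (hX₁ : frobNorm X₁ ≤ RX) (hX₂ : frobNorm X₂ ≤ RX)
    (hW₁ : frobNorm W₁ ≤ RW) (hW₂ : frobNorm W₂ ≤ RW) :
    ℓ X₁ W₁ - ℓ X₂ W₂ ≤ M * (frobNorm (X₁ - X₂) + lam⁻¹ * RX ^ 2 * frobNorm (W₁ - W₂)) := by
  set f₁ : Matrix (Fin r) (Fin n) ℝ → ℝ :=
    fun H => frobNorm (X₁ - W₁ * H) ^ 2 + lam * oneNorm H with hf₁
  set f₂ : Matrix (Fin r) (Fin n) ℝ → ℝ :=
    fun H => frobNorm (X₂ - W₂ * H) ^ 2 + lam * oneNorm H with hf₂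
  have hfnonneg : ∀ (X : Matrix (Fin d) (Fin n) ℝ) (W : Matrix (Fin d) (Fin r) ℝ)
      (H : Matrix (Fin r) (Fin n) ℝ),
      (0:ℝ) ≤ frobNorm (X - W * H) ^ 2 + lam * oneNorm H := fun X W H =>
    add_nonneg (sq_nonneg _) (mul_nonneg hlam.le (oneNorm_nonneg _))
  have hbdd₁ : BddBelow (f₁ '' C') := ⟨0, by rintro _ ⟨H, _, rfl⟩; exact hfnonneg _ _ H⟩
  have hbdd₂ : BddBelow (f₂ '' C') := ⟨0, by rintro _ ⟨H, _, rfl⟩; exact hfnonneg _ _ H⟩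
  obtain ⟨H, hHmem, hHmin⟩ := hC'.exists_isMinOn ⟨0, h0⟩ (sc_cont lam X₂ W₂).continuousOn
  have hℓ₂ : ℓ X₂ W₂ = f₂ H := by
    rw [hℓ]
    refine le_antisymm (csInf_le hbdd₂ ⟨H, hHmem, rfl⟩) ?_
    refine le_csInf ⟨_, ⟨0, h0, rfl⟩⟩ ?_
    rintro _ ⟨K, hK, rfl⟩
    exact hHmin hK
  have hℓ₁ : ℓ X₁ W₁ ≤ f₁ H := by
    rw [hℓ]
    exact csInf_le hbdd₁ ⟨H, hHmem, rfl⟩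
  have hℓ₂le : ℓ X₂ W₂ ≤ RX ^ 2 := by
    rw [hℓ]
    calc sInf (f₂ '' C') ≤ f₂ 0 := csInf_le hbdd₂ ⟨0, h0, rfl⟩
      _ = frobNorm X₂ ^ 2 := by simp [hf₂, oneNorm_zero]
      _ ≤ RX ^ 2 := pow_le_pow_left₀ (frobNorm_nonneg _) hX₂ 2
  have hHone : oneNorm H ≤ RX ^ 2 / lam := by
    rw [le_div_iff₀ hlam]
    have h1 : lam * oneNorm H ≤ f₂ H := le_add_of_nonneg_left (sq_nonneg _)
    have := hℓ₂ ▸ hℓ₂le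
    linarith [mul_comm lam (oneNorm H) ▸ h1]
  have hHfrob : frobNorm H ≤ RX ^ 2 / lam := (frobNorm_le_oneNorm H).trans hHone
  set a := frobNorm (X₁ - W₁ * H) with ha
  set b := frobNorm (X₂ - W₂ * H) with hb
  set δ := frobNorm (X₁ - X₂) + lam⁻¹ * RX ^ 2 * frobNorm (W₁ - W₂) with hδ
  have hδ0 : 0 ≤ δ := add_nonneg (frobNorm_nonneg _)
    (mul_nonneg (mul_nonneg (inv_nonneg.2 hlam.le) (sq_nonneg _)) (frobNorm_nonneg _))
  have ha0 : 0 ≤ a := frobNorm_nonneg _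
  have hb0 : 0 ≤ b := frobNorm_nonneg _
  have haK : a ≤ RX + RW * (RX ^ 2 / lam) := by
    calc a ≤ frobNorm X₁ + frobNorm (W₁ * H) := frobNorm_sub_le _ _
      _ ≤ frobNorm X₁ + frobNorm W₁ * frobNorm H := by linarith [frobNorm_mul_le W₁ H]
      _ ≤ RX + RW * (RX ^ 2 / lam) := by
          have := mul_le_mul hW₁ hHfrob (frobNorm_nonneg H) hRW.le
          linarith
  have hbK : b ≤ RX + RW * (RX ^ 2 / lam) := by
    calc b ≤ frobNorm X₂ + frobNorm (W₂ * H) := frobNorm_sub_le _ _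
      _ ≤ frobNorm X₂ + frobNorm W₂ * frobNorm H := by linarith [frobNorm_mul_le W₂ H]
      _ ≤ RX + RW * (RX ^ 2 / lam) := by
          have := mul_le_mul hW₂ hHfrob (frobNorm_nonneg H) hRW.le
          linarith
  have habM : a + b ≤ M := by
    rw [hM]
    have : 2 * RW * RX ^ 2 / lam = 2 * (RW * (RX ^ 2 / lam)) := by ring
    linarith [haK, hbK]
  have hab : a ≤ b + δ := by
    have hid : X₁ - W₁ * H = (X₂ - W₂ * H) + ((X₁ - X₂) - (W₁ - W₂) * H) := by
      rw [Matrix.sub_mul]; abel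
    calc a = frobNorm ((X₂ - W₂ * H) + ((X₁ - X₂) - (W₁ - W₂) * H)) := by rw [ha, hid]
      _ ≤ b + frobNorm ((X₁ - X₂) - (W₁ - W₂) * H) := frobNorm_add_le _ _
      _ ≤ b + (frobNorm (X₁ - X₂) + frobNorm ((W₁ - W₂) * H)) := by
          linarith [frobNorm_sub_le (X₁ - X₂) ((W₁ - W₂) * H)]
      _ ≤ b + δ := by
          have h1 := frobNorm_mul_le (W₁ - W₂) H
          have h2 := mul_le_mul_of_nonneg_left hHfrob (frobNorm_nonneg (W₁ - W₂))
          have h3 : frobNorm (W₁ - W₂) * (RX ^ 2 / lam) = lam⁻¹ * RX ^ 2 * frobNorm (W₁ - W₂) := by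
            ring
          rw [hδ]; linarith
  have hM0 : 0 ≤ M := le_trans (by linarith) habM
  have key : a ^ 2 - b ^ 2 ≤ M * δ := by
    nlinarith [mul_nonneg (add_nonneg ha0 hb0) (by linarith : (0:ℝ) ≤ b + δ - a),
      mul_nonneg (by linarith : (0:ℝ) ≤ M - (a + b)) hδ0]
  have hdiff : ℓ X₁ W₁ - ℓ X₂ W₂ ≤ a ^ 2 - b ^ 2 := by
    have : f₁ H - f₂ H = a ^ 2 - b ^ 2 := by simp [hf₁, hf₂]; try ring
    linarith [hℓ₁, hℓ₂.le, hℓ₂.ge, this.le, this.ge]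
  linarith

/-- Lipschitz continuity of the sparse-coding loss
`ℓ(X, W) = inf_{H ∈ C'} (‖X − WH‖_F² + λ‖H‖₁)` on bounded sets of data matrices
and dictionaries, with constant `M = 2R_X + 2R_W R_X²/λ`. -/
theorem stmt8 {d n r : ℕ} (lam RX RW : ℝ) (hlam : 0 < lam) (hRX : 0 < RX) (hRW : 0 < RW)
    (C' : Set (Matrix (Fin r) (Fin n) ℝ)) (hC' : IsCompact C')
    (h0 : (0 : Matrix (Fin r) (Fin n) ℝ) ∈ C')
    (ℓ : Matrix (Fin d) (Fin n) ℝ → Matrix (Fin d) (Fin r) ℝ → ℝ)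
    (hℓ : ∀ X W, ℓ X W = sInf ((fun H : Matrix (Fin r) (Fin n) ℝ =>
      frobNorm (X - W * H) ^ 2 + lam * oneNorm H) '' C'))
    (M : ℝ) (hM : M = 2 * RX + 2 * RW * RX ^ 2 / lam)
    (X₁ X₂ : Matrix (Fin d) (Fin n) ℝ) (W₁ W₂ : Matrix (Fin d) (Fin r) ℝ)
    (hX₁ : frobNorm X₁ ≤ RX) (hX₂ : frobNorm X₂ ≤ RX)
    (hW₁ : frobNorm W₁ ≤ RW) (hW₂ : frobNorm W₂ ≤ RW) :
    |ℓ X₁ W₁ - ℓ X₂ W₂| ≤ M * (frobNorm (X₁ - X₂) + lam⁻¹ * RX ^ 2 * frobNorm (W₁ - W₂)) := by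
  rw [abs_sub_le_iff]
  constructor
  · exact stmt8_key lam RX RW hlam hRX hRW C' hC' h0 ℓ hℓ M hM X₁ X₂ W₁ W₂ hX₁ hX₂ hW₁ hW₂
  · have := stmt8_key lam RX RW hlam hRX hRW C' hC' h0 ℓ hℓ M hM X₂ X₁ W₂ W₁ hX₂ hX₁ hW₂ hW₁
    rwa [frobNorm_sub_comm X₂ X₁, frobNorm_sub_comm W₂ W₁] at this
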